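/- With R̄(b) as in the quadratic case and f(b) proportional to 1/R̄(b) on [-a,a] with normalizing constant 3(2+a)^3/(16 a (12 + 6a + a^2)) when a ≤ 2, one has ∫_{-a}^{a} b^2 f(b) db = 4a^2/(12 + 6a + a^2) for 0 < a ≤ 2. -/

import Mathlib

/-- `R̄(b)`: squared minimal Chebyshev deviation for the quadratic case. -/
noncomputable def Rbar (b : ℝ) : ℝ := if |b| ≤ 2 then (1/4)*(1 + |b|/2)^4 else b^2

/-- For `0 < a ≤ 2` and the density
`f(b) = [3(2+a)³/(16a(12+6a+a²))] / R̄(b)` on `[-a,a]`, the second moment is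
`∫_{-a}^{a} b² f(b) db = 4a²/(12+6a+a²)`. -/
theorem second_moment_density_small_a (a : ℝ) (ha0 : 0 < a) (ha : a ≤ 2) :
    (∫ b in (-a)..a,
        b^2 * (3*(2+a)^3 / (16*a*(12 + 6*a + a^2)) / Rbar b)) =
      4*a^2 / (12 + 6*a + a^2) := by
  set K : ℝ := 3*(2+a)^3 / (16*a*(12 + 6*a + a^2)) with hK
  set G : ℝ → ℝ := fun b => b^2 * (K / ((1/4)*(1 + |b|/2)^4)) with hG
  have hGcont : Continuous G := by
    apply Continuous.mul (by continuity)
    apply Continuous.div continuous_const (by continuity)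
    intro b
    have h1 : (0:ℝ) < 1 + |b|/2 := by positivity
    positivity
  have hstep1 : (∫ b in (-a)..a, b^2 * (K / Rbar b)) = ∫ b in (-a)..a, G b := by
    apply intervalIntegral.integral_congr
    intro b hb
    rw [Set.uIcc_of_le (by linarith)] at hb
    have hb' : |b| ≤ 2 := by
      rw [abs_le]; exact ⟨by linarith [hb.1], by linarith [hb.2]⟩
    simp [hG, Rbar, hb']
  rw [hstep1]
  have heven : ∀ b, G (-b) = G b := by intro b; simp [hG, abs_neg]
  have hsplit : (∫ b in (-a)..a, G b) = 2 * ∫ b in (0:ℝ)..a, G b := by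
    rw [← intervalIntegral.integral_add_adjacent_intervals (a := -a) (b := 0) (c := a)
      (hGcont.intervalIntegrable _ _) (hGcont.intervalIntegrable _ _)]
    have h2 : (∫ b in (-a)..(0:ℝ), G b) = ∫ b in (0:ℝ)..a, G b := by
      have := intervalIntegral.integral_comp_neg (a := (0:ℝ)) (b := a) G
      simp only [heven, neg_zero] at this
      exact this.symm
    rw [h2]; ring
  rw [hsplit]
  -- antiderivative on [0,a]
  set F : ℝ → ℝ := fun b =>
    32*K*(-(1 + b/2)⁻¹ + ((1 + b/2)^2)⁻¹ - ((1 + b/2)^3)⁻¹/3) with hF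
  have hderiv : ∀ b ∈ Set.uIcc (0:ℝ) a, HasDerivAt F (G b) b := by
    intro b hb
    rw [Set.uIcc_of_le (le_of_lt ha0)] at hb
    have hbpos : (0:ℝ) ≤ b := hb.1
    have hu : (0:ℝ) < 1 + b/2 := by linarith
    have hu' : (1 + b/2) ≠ 0 := ne_of_gt hu
    have h1 : HasDerivAt (fun b : ℝ => 1 + b/2) (1/2) b := by
      simpa using ((hasDerivAt_id b).div_const 2).const_add 1
    have h2 : HasDerivAt (fun b : ℝ => (1 + b/2)⁻¹)
        (-(1/2) / (1 + b/2)^2) b := by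
      simpa [Pi.inv_def] using h1.inv hu'
    have h3 : HasDerivAt (fun b : ℝ => ((1 + b/2)^2)⁻¹)
        (-(2*(1 + b/2)*(1/2)) / ((1 + b/2)^2)^2) b := by
      have := (h1.pow 2).inv (pow_ne_zero 2 hu')
      simpa [Pi.inv_def, mul_comm, mul_assoc, mul_left_comm] using this
    have h4 : HasDerivAt (fun b : ℝ => ((1 + b/2)^3)⁻¹)
        (-(3*(1 + b/2)^2*(1/2)) / ((1 + b/2)^3)^2) b := by
      have := (h1.pow 3).inv (pow_ne_zero 3 hu')
      simpa [Pi.inv_def, mul_comm, mul_assoc, mul_left_comm] using this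
    have h5 : HasDerivAt F _ b := (((h2.neg.add h3).sub (h4.div_const 3)).const_mul (32*K))
    convert h5 using 1
    have habs : |b| = b := abs_of_nonneg hbpos
    simp only [hG, habs]
    have hu2 : ((1 + b/2)^2) ≠ 0 := pow_ne_zero _ hu'
    have hu4 : ((1 + b/2)^4) ≠ 0 := pow_ne_zero _ hu'
    field_simp
    ring
  have hint : IntervalIntegrable G MeasureTheory.volume 0 a :=
    hGcont.intervalIntegrable _ _
  rw [intervalIntegral.integral_eq_sub_of_hasDerivAt hderiv hint]
  have h2a : (2 + a) ≠ 0 := by positivity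
  have hq : (12 + 6*a + a^2) ≠ 0 := by positivity
  have ha' : a ≠ 0 := ne_of_gt ha0
  simp only [hF, hK]
  field_simp
  ring
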